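/- With α the striction curve and λ the distribution parameter as above, the ruled surface ψ(u,v) in S^3(r) has a singular point at (u,v) (i.e., ψ_u × ψ_v = 0, equivalently g(u,v) = 0) if and only if sin(v/r) = 0 and λ(u) = 0. In particular, all singular points lie on the striction curve or its antipodal curve. -/

import Mathlib

/-- Euclidean inner product on `ℝ⁴`. -/
noncomputable def dot4 (u v : Fin 4 → ℝ) : ℝ := ∑ i, u i * v i

/-- Determinant of the 4×4 matrix with rows `a, b, c, d`. -/
noncomputable def det4 (a b c d : Fin 4 → ℝ) : ℝ := (Matrix.of ![a, b, c, d]).det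

lemma dot4_comm (u v : Fin 4 → ℝ) : dot4 u v = dot4 v u :=
  Finset.sum_congr rfl fun _ _ => mul_comm _ _

lemma dot4_nonneg (u : Fin 4 → ℝ) : 0 ≤ dot4 u u :=
  Finset.sum_nonneg fun _ _ => mul_self_nonneg _

lemma dot4_pos (u : Fin 4 → ℝ) (hu : u ≠ 0) : 0 < dot4 u u := by
  rcases (dot4_nonneg u).lt_or_eq with h | h
  · exact h
  · exfalso; apply hu; funext i
    have h2 := (Finset.sum_eq_zero_iff_of_nonneg
      (fun i _ => mul_self_nonneg (u i))).mp h.symm i (Finset.mem_univ i)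
    simpa using mul_self_eq_zero.mp h2

lemma dot4_expand (p q x y : ℝ) (X Y U V : Fin 4 → ℝ) :
    dot4 (p • X + q • Y) (x • U + y • V) =
      p*x*dot4 X U + p*y*dot4 X V + q*x*dot4 Y U + q*y*dot4 Y V := by
  simp [dot4, Fin.sum_univ_four]; ring

lemma dot4_add_smul_left (k : ℝ) (X Y W : Fin 4 → ℝ) :
    dot4 (X + k • Y) W = dot4 X W + k * dot4 Y W := by
  simp [dot4, Fin.sum_univ_four]; ring

lemma dot4_add_smul_right (k : ℝ) (X Y W : Fin 4 → ℝ) :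
    dot4 W (X + k • Y) = dot4 W X + k * dot4 W Y := by
  simp [dot4, Fin.sum_univ_four]; ring

lemma hasDerivAt_dot4 {f h : ℝ → Fin 4 → ℝ} {f' h' : Fin 4 → ℝ} {u : ℝ}
    (hf : HasDerivAt f f' u) (hh : HasDerivAt h h' u) :
    HasDerivAt (fun t => dot4 (f t) (h t)) (dot4 f' (h u) + dot4 (f u) h') u := by
  have hc : ∀ i : Fin 4, HasDerivAt (fun t => f t i) (f' i) u := fun i =>
    (ContinuousLinearMap.proj i : (Fin 4 → ℝ) →L[ℝ] ℝ).hasFDerivAt.comp_hasDerivAt u hf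
  have hc' : ∀ i : Fin 4, HasDerivAt (fun t => h t i) (h' i) u := fun i =>
    (ContinuousLinearMap.proj i : (Fin 4 → ℝ) →L[ℝ] ℝ).hasFDerivAt.comp_hasDerivAt u hh
  have H : HasDerivAt (fun t => ∑ i : Fin 4, f t i * h t i)
      (∑ i : Fin 4, (f' i * h u i + f u i * h' i)) u :=
    HasDerivAt.fun_sum fun i _ => (hc i).mul (hc' i)
  have he : (∑ i : Fin 4, (f' i * h u i + f u i * h' i))
      = dot4 f' (h u) + dot4 (f u) h' := by
    simp [dot4, Finset.sum_add_distrib]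
  rw [he] at H
  exact H

lemma det4_sq (x y z w : Fin 4 → ℝ) :
    det4 x y z w ^ 2 = ((Matrix.of ![x,y,z,w]) * (Matrix.of ![x,y,z,w]).transpose).det := by
  rw [Matrix.det_mul, Matrix.det_transpose, det4, sq]

lemma gram_det (A Zu DZu A' : Fin 4 → ℝ) (r a m : ℝ)
    (h1 : dot4 A A = r^2) (h2 : dot4 A Zu = 0) (h3 : dot4 A DZu = 0) (h4 : dot4 A A' = 0)
    (h2' : dot4 Zu A = 0) (h5 : dot4 Zu Zu = 1) (h6 : dot4 Zu DZu = 0) (h7 : dot4 Zu A' = a)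
    (h3' : dot4 DZu A = 0) (h6' : dot4 DZu Zu = 0) (h8 : dot4 DZu DZu = m) (h9 : dot4 DZu A' = 0)
    (h4' : dot4 A' A = 0) (h7' : dot4 A' Zu = a) (h9' : dot4 A' DZu = 0) (h10 : dot4 A' A' = 1) :
    det4 A Zu DZu A' ^ 2 = r^2 * (m * (1 - a^2)) := by
  have hM : ∀ i j : Fin 4,
      ((Matrix.of ![A,Zu,DZu,A']) * (Matrix.of ![A,Zu,DZu,A']).transpose) i j
        = dot4 (![A,Zu,DZu,A'] i) (![A,Zu,DZu,A'] j) := by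
    intro i j
    simp only [Matrix.mul_apply, Matrix.transpose_apply, Matrix.of_apply, dot4]
  have hgram : (Matrix.of ![A,Zu,DZu,A']) * (Matrix.of ![A,Zu,DZu,A']).transpose
      = !![r^2,0,0,0; 0,1,0,a; 0,0,m,0; 0,a,0,1] := by
    ext i j
    rw [hM]
    fin_cases i <;> fin_cases j <;>
      simp [Matrix.vecHead, Matrix.vecTail, h1, h2, h3, h4, h2', h5, h6, h7, h3', h6',
        h8, h9, h4', h7', h9', h10]
  rw [det4_sq, hgram]
  simp only [Matrix.det_succ_row_zero, Fin.sum_univ_succ, Matrix.submatrix_apply,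
    Matrix.det_fin_zero, Fin.succAbove_zero, Matrix.cons_val', Matrix.cons_val_zero,
    Matrix.cons_val_one, Matrix.head_cons, Matrix.head_fin_const, Matrix.empty_val',
    Matrix.cons_val_fin_one, Matrix.cons_val_succ, Fin.val_succ, Fin.val_zero,
    Finset.univ_unique, Fin.default_eq_zero, Finset.sum_singleton, Fin.sum_univ_zero,
    Matrix.of_apply, Fin.succ_zero_eq_one, Matrix.vecHead, Matrix.vecTail]
  norm_num [Fin.succAbove, Fin.lt_def, Matrix.vecHead, Matrix.vecTail]
  try (left; ring)
  try ring

set_option maxHeartbeats 1600000 in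
/-- with `α` the striction curve and `λ` the distribution parameter, the ruled
surface `ψ(u,v) = cos(v/r)α(u) + r sin(v/r)Z(u)` in `S³(r)` is singular at `(u,v)`
(i.e. `g(u,v) = g₁₁g₂₂ − g₁₂² = 0`) if and only if `sin(v/r) = 0` and `λ(u) = 0`. -/
theorem ruled_surface_singular_iff (r : ℝ) (hr : 0 < r) (α Z : ℝ → Fin 4 → ℝ)
    (hα : Differentiable ℝ α) (hZ : Differentiable ℝ Z)
    (hsph : ∀ u, dot4 (α u) (α u) = r ^ 2)
    (hunit : ∀ u, dot4 (deriv α u) (deriv α u) = 1)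
    (hZ1 : ∀ u, dot4 (Z u) (Z u) = 1)
    (hZα : ∀ u, dot4 (Z u) (α u) = 0) :
    let ψ : ℝ → ℝ → Fin 4 → ℝ :=
      fun u v => Real.cos (v / r) • α u + (r * Real.sin (v / r)) • Z u
    let DZ : ℝ → Fin 4 → ℝ :=
      fun u => deriv Z u + ((1 / r ^ 2) * dot4 (deriv α u) (Z u)) • α u
    let lam : ℝ → ℝ :=
      fun u => det4 (α u) (Z u) (DZ u) (deriv α u) / dot4 (DZ u) (DZ u)
    let g₁₁ : ℝ → ℝ → ℝ :=
      fun u v => dot4 (deriv (fun t => ψ t v) u) (deriv (fun t => ψ t v) u)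
    let g₁₂ : ℝ → ℝ → ℝ :=
      fun u v => dot4 (deriv (fun t => ψ t v) u) (deriv (fun t => ψ u t) v)
    let g₂₂ : ℝ → ℝ → ℝ :=
      fun u v => dot4 (deriv (fun t => ψ u t) v) (deriv (fun t => ψ u t) v)
    (∀ u, dot4 (deriv α u) (DZ u) = 0) →  -- α is the striction curve
    (∀ u, DZ u ≠ 0) →
    ∀ u v, Real.cos (v / r) ≠ 0 →
      (g₁₁ u v * g₂₂ u v - g₁₂ u v ^ 2 = 0
        ↔ Real.sin (v / r) = 0 ∧ lam u = 0) := by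
  intro ψ DZ lam g₁₁ g₁₂ g₂₂ hstr hDZ u v hcos
  have hr0 : r ≠ 0 := ne_of_gt hr
  -- basic orthogonality from differentiating the constraints
  have dαα : ∀ t, dot4 (deriv α t) (α t) = 0 := by
    intro t
    have h1 := hasDerivAt_dot4 (hα t).hasDerivAt (hα t).hasDerivAt
    rw [show (fun x => dot4 (α x) (α x)) = fun _ => r ^ 2 from funext hsph] at h1
    have h3 := h1.unique (hasDerivAt_const t (r^2))
    rw [dot4_comm (α t) (deriv α t)] at h3
    linarith
  have dZZ : ∀ t, dot4 (deriv Z t) (Z t) = 0 := by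
    intro t
    have h1 := hasDerivAt_dot4 (hZ t).hasDerivAt (hZ t).hasDerivAt
    rw [show (fun x => dot4 (Z x) (Z x)) = fun _ => (1:ℝ) from funext hZ1] at h1
    have h3 := h1.unique (hasDerivAt_const t (1:ℝ))
    rw [dot4_comm (Z t) (deriv Z t)] at h3
    linarith
  have dZα : ∀ t, dot4 (deriv Z t) (α t) = - dot4 (deriv α t) (Z t) := by
    intro t
    have h1 := hasDerivAt_dot4 (hZ t).hasDerivAt (hα t).hasDerivAt
    rw [show (fun x => dot4 (Z x) (α x)) = fun _ => (0:ℝ) from funext hZα] at h1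
    have h3 := h1.unique (hasDerivAt_const t (0:ℝ))
    rw [dot4_comm (Z t) (deriv α t)] at h3
    linarith
  -- abbreviations
  set c := Real.cos (v / r) with hcdef
  set s := Real.sin (v / r) with hsdef
  set A := α u with hA
  set Zu := Z u with hZu
  set A' := deriv α u with hA'
  set Z' := deriv Z u with hZ'
  set a := dot4 A' Zu with hadef
  set k := (1 / r ^ 2) * a with hkdef
  have hDZu : DZ u = Z' + k • A := rfl
  -- dot products table
  have eAA : dot4 A A = r ^ 2 := hsph u
  have eZZ : dot4 Zu Zu = 1 := hZ1 u
  have eZA : dot4 Zu A = 0 := hZα u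
  have eAZ : dot4 A Zu = 0 := by rw [dot4_comm]; exact eZA
  have eA'A : dot4 A' A = 0 := dαα u
  have eAA' : dot4 A A' = 0 := by rw [dot4_comm]; exact eA'A
  have eA'A' : dot4 A' A' = 1 := hunit u
  have eZ'Z : dot4 Z' Zu = 0 := dZZ u
  have eZZ' : dot4 Zu Z' = 0 := by rw [dot4_comm]; exact eZ'Z
  have eZ'A : dot4 Z' A = -a := dZα u
  have eAZ' : dot4 A Z' = -a := by rw [dot4_comm]; exact eZ'A
  have eA'Z : dot4 A' Zu = a := rfl
  have eZA' : dot4 Zu A' = a := by rw [dot4_comm]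
  -- striction: dot4 A' Z' = 0
  have hstr' : dot4 A' Z' = 0 := by
    have h := hstr u
    rw [hDZu, dot4_add_smul_right] at h
    rw [eA'A] at h
    simpa using h
  have eZ'A' : dot4 Z' A' = 0 := by rw [dot4_comm]; exact hstr'
  -- b and m
  set b := dot4 Z' Z' with hbdef
  set m := dot4 (DZ u) (DZ u) with hmdef
  have hmpos : 0 < m := dot4_pos _ (hDZ u)
  have hmb : m = b - a ^ 2 / r ^ 2 := by
    rw [hmdef, hDZu, dot4_add_smul_right, dot4_add_smul_left, dot4_add_smul_left,
      eAZ', eZ'A, eAA, hkdef]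
    field_simp
    ring
  -- derivatives of ψ
  have hψu : deriv (fun t => ψ t v) u = c • A' + (r * s) • Z' := by
    have h : HasDerivAt (fun t => ψ t v) (c • deriv α u + (r * s) • deriv Z u) u :=
      ((hα u).hasDerivAt.const_smul c).add ((hZ u).hasDerivAt.const_smul (r * s))
    exact h.deriv
  have hv1 : HasDerivAt (fun t : ℝ => Real.cos (t / r)) (-s * (1 / r)) v := by
    have h := (Real.hasDerivAt_cos (v / r)).comp v ((hasDerivAt_id v).div_const r)
    exact h
  have hv2 : HasDerivAt (fun t : ℝ => r * Real.sin (t / r)) c v := by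
    have h : HasDerivAt (fun t : ℝ => r * Real.sin (t / r)) (r * (c * (1 / r))) v := by
      simpa [Function.comp] using
        ((Real.hasDerivAt_sin (v / r)).comp v ((hasDerivAt_id v).div_const r)).const_mul r
    have he : r * (c * (1 / r)) = c := by field_simp
    rwa [he] at h
  have hψv : deriv (fun t => ψ u t) v = (-s * (1 / r)) • A + c • Zu := by
    have h : HasDerivAt (fun t => ψ u t) ((-s * (1 / r)) • α u + c • Z u) v :=
      (hv1.smul_const (α u)).add (hv2.smul_const (Z u))
    exact h.deriv
  have pyth : s ^ 2 + c ^ 2 = 1 := Real.sin_sq_add_cos_sq (v / r)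
  -- the metric coefficients
  have hg11 : g₁₁ u v = c ^ 2 + (r * s) ^ 2 * b := by
    show dot4 (deriv (fun t => ψ t v) u) (deriv (fun t => ψ t v) u) = _
    rw [hψu, dot4_expand, eA'A', hstr', eZ'A']
    ring
  have hg12 : g₁₂ u v = a := by
    show dot4 (deriv (fun t => ψ t v) u) (deriv (fun t => ψ u t) v) = a
    rw [hψu, hψv, dot4_expand, eA'A, eA'Z, eZ'A, eZ'Z]
    field_simp
    linear_combination (a * r) * pyth
  have hg22 : g₂₂ u v = 1 := by
    show dot4 (deriv (fun t => ψ u t) v) (deriv (fun t => ψ u t) v) = 1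
    rw [hψv, dot4_expand, eAA, eAZ, eZA, eZZ]
    field_simp
    linear_combination r * pyth
  -- Gram determinant
  have eADZ : dot4 A (DZ u) = 0 := by
    rw [hDZu, dot4_add_smul_right, eAZ', eAA, hkdef]
    field_simp
    ring
  have eDZA : dot4 (DZ u) A = 0 := by rw [dot4_comm]; exact eADZ
  have eZDZ : dot4 Zu (DZ u) = 0 := by
    rw [hDZu, dot4_add_smul_right, eZZ', eZA]
    ring
  have eDZZ : dot4 (DZ u) Zu = 0 := by rw [dot4_comm]; exact eZDZ
  have eA'DZ : dot4 A' (DZ u) = 0 := hstr u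
  have eDZA' : dot4 (DZ u) A' = 0 := by rw [dot4_comm]; exact eA'DZ
  have eDZDZ : dot4 (DZ u) (DZ u) = m := rfl
  have hD2 : det4 A Zu (DZ u) A' ^ 2 = r ^ 2 * (m * (1 - a ^ 2)) :=
    gram_det A Zu (DZ u) A' r a m eAA eAZ eADZ eAA' eZA eZZ eZDZ eZA'
      eDZA eDZZ eDZDZ eDZA' eA'A eA'Z eA'DZ eA'A'
  have hr2 : (0:ℝ) < r ^ 2 := pow_pos hr 2
  set D := det4 A Zu (DZ u) A' with hDdef
  have hlam0 : lam u = D / m := rfl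
  rw [hg11, hg12, hg22, hlam0]
  clear_value D
  clear_value m
  clear_value b
  clear_value k
  clear_value a
  clear_value c
  clear_value s
  have h1a : 0 ≤ 1 - a ^ 2 := by
    by_contra hneg
    push_neg at hneg
    have hlt : r ^ 2 * (m * (1 - a ^ 2)) < 0 :=
      mul_neg_of_pos_of_neg hr2 (mul_neg_of_pos_of_neg hmpos hneg)
    have h0 : 0 ≤ r ^ 2 * (m * (1 - a ^ 2)) := hD2 ▸ sq_nonneg D
    linarith
  -- distribution parameter
  have hlam : D / m = 0 ↔ 1 - a ^ 2 = 0 := by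
    rw [div_eq_zero_iff]
    constructor
    · rintro (h | h)
      · have h0 : r ^ 2 * (m * (1 - a ^ 2)) = 0 := by rw [← hD2, h]; ring
        rcases mul_eq_zero.mp h0 with h' | h'
        · exact absurd h' (pow_ne_zero 2 hr0)
        rcases mul_eq_zero.mp h' with h'' | h''
        · exact absurd h'' (ne_of_gt hmpos)
        · exact h''
      · exact absurd h (ne_of_gt hmpos)
    · intro h
      left
      have h0 : D ^ 2 = 0 := by rw [hD2, h]; ring
      exact pow_eq_zero_iff (two_ne_zero) |>.mp h0
  rw [hlam]
  have hb : b = m + a ^ 2 / r ^ 2 := by rw [hmb]; ring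
  have hkey : (c ^ 2 + (r * s) ^ 2 * b) * 1 - a ^ 2
      = c ^ 2 * (1 - a ^ 2) + r ^ 2 * s ^ 2 * m := by
    rw [hb]
    field_simp
    linear_combination a ^ 2 * pyth
  rw [hkey]
  constructor
  · intro h
    have t1 : 0 ≤ c ^ 2 * (1 - a ^ 2) := mul_nonneg (sq_nonneg c) h1a
    have t2 : 0 ≤ r ^ 2 * s ^ 2 * m := by positivity
    have e1 : c ^ 2 * (1 - a ^ 2) = 0 := by linarith
    have e2 : r ^ 2 * s ^ 2 * m = 0 := by linarith
    constructor
    · rcases mul_eq_zero.mp e2 with h' | h'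
      · rcases mul_eq_zero.mp h' with h'' | h''
        · exact absurd h'' (pow_ne_zero 2 hr0)
        · exact pow_eq_zero_iff two_ne_zero |>.mp h''
      · exact absurd h' (ne_of_gt hmpos)
    · rcases mul_eq_zero.mp e1 with h' | h'
      · exact absurd h' (pow_ne_zero 2 hcos)
      · exact h'
  · rintro ⟨hs, ha1⟩
    rw [hs, ha1]
    ring
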